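/- For the Laplace distribution with scale λ > 0: for all reals a, b with |a - b| ≤ 1, Pr[Lap(λ) > a] ≤ e^{1/λ}·Pr[Lap(λ) > b] and Pr[Lap(λ) ≤ a] ≤ e^{1/λ}·Pr[Lap(λ) ≤ b]. -/

import Mathlib

open Real MeasureTheory

/-- Pr[Lap(l) > t] for the Laplace distribution with scale l,
density (1/(2l))·exp(-|y|/l). -/
noncomputable def lapTail (l t : ℝ) : ℝ :=
  ∫ y in Set.Ioi t, (1 / (2 * l)) * Real.exp (-|y| / l)

/-- Pr[Lap(l) ≤ t]. -/
noncomputable def lapCDF (l t : ℝ) : ℝ :=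
  ∫ y in Set.Iic t, (1 / (2 * l)) * Real.exp (-|y| / l)

lemma lapDen_integrable (l : ℝ) (hl : 0 < l) :
    Integrable (fun y : ℝ => (1 / (2 * l)) * Real.exp (-|y| / l)) := by
  have h1 : IntegrableOn (fun y : ℝ => Real.exp (-|y| / l)) (Set.Ioi 0) := by
    refine (exp_neg_integrableOn_Ioi 0 (show (0:ℝ) < 1/l by positivity)).congr_fun ?_
      measurableSet_Ioi
    intro y hy
    rw [Set.mem_Ioi] at hy
    show Real.exp (-(1/l) * y) = Real.exp (-|y| / l)
    rw [abs_of_pos hy]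
    ring_nf
  have h2 : IntegrableOn (fun y : ℝ => Real.exp (-|y| / l)) (Set.Iic 0) := by
    rw [← Measure.map_neg_eq_self (volume : Measure ℝ)]
    let m : MeasurableEmbedding fun x : ℝ => -x := (Homeomorph.neg ℝ).measurableEmbedding
    rw [m.integrableOn_map_iff]
    simp_rw [Function.comp_def, abs_neg, Set.neg_preimage, Set.neg_Iic, neg_zero]
    exact (integrableOn_Ici_iff_integrableOn_Ioi).mpr h1
  have h : IntegrableOn (fun y : ℝ => Real.exp (-|y| / l)) (Set.Iic 0 ∪ Set.Ioi 0) :=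
    h2.union h1
  rw [Set.Iic_union_Ioi] at h
  exact (integrableOn_univ.mp h).const_mul _

lemma lap_shift (l c : ℝ) (s : Set ℝ) (hs : MeasurableSet s) :
    ∫ y in s, (1 / (2 * l)) * Real.exp (-|y| / l)
      = ∫ y in (fun y => y + c) ⁻¹' s, (1 / (2 * l)) * Real.exp (-|y + c| / l) := by
  set f : ℝ → ℝ := fun y => (1 / (2 * l)) * Real.exp (-|y| / l) with hf
  have h1 : ∫ y in s, f y = ∫ y, s.indicator f y := (integral_indicator hs).symm
  have h2 : ∫ y, s.indicator f y = ∫ y, s.indicator f (y + c) :=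
    (integral_add_right_eq_self (s.indicator f) c).symm
  have h3 : ∀ y : ℝ, s.indicator f (y + c)
      = ((fun y => y + c) ⁻¹' s).indicator (fun y => f (y + c)) y := by
    intro y
    simpa [Function.comp_def] using
      (Set.indicator_comp_right (fun y : ℝ => y + c) (g := f) (s := s) (x := y)).symm
  have h4 : ∫ y, s.indicator f (y + c)
      = ∫ y in (fun y => y + c) ⁻¹' s, f (y + c) := by
    simp_rw [h3]
    exact integral_indicator (hs.preimage (measurable_add_const c))
  rw [h1, h2, h4]

theorem stmt18 (l a b : ℝ) (hl : 0 < l) (hab : |a - b| ≤ 1) :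
    lapTail l a ≤ Real.exp (1 / l) * lapTail l b ∧
      lapCDF l a ≤ Real.exp (1 / l) * lapCDF l b := by
  set f : ℝ → ℝ := fun y => (1 / (2 * l)) * Real.exp (-|y| / l) with hf
  set c : ℝ := a - b with hc
  have hint : Integrable f := lapDen_integrable l hl
  have hintc : Integrable (fun y => f (y + c)) := hint.comp_add_right c
  have hpt : ∀ y : ℝ, f (y + c) ≤ Real.exp (1 / l) * f y := by
    intro y
    have h1 : |y| - |y + c| ≤ 1 := by
      have := abs_sub_abs_le_abs_sub y (y + c)
      simp only [sub_add_cancel_left, abs_neg] at this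
      linarith
    have h2 : (|y| - |y + c|) / l ≤ 1 / l := by gcongr
    rw [sub_div] at h2
    have h3 : Real.exp (-|y + c| / l) ≤ Real.exp (1 / l) * Real.exp (-|y| / l) := by
      rw [← Real.exp_add]
      apply Real.exp_le_exp.mpr
      have : -|y + c| / l ≤ 1 / l - |y| / l := by linarith [neg_div l (|y + c|), neg_div l (|y|)]
      linarith [neg_div l (|y|)]
    calc (1 / (2 * l)) * Real.exp (-|y + c| / l)
        ≤ (1 / (2 * l)) * (Real.exp (1 / l) * Real.exp (-|y| / l)) := by
          apply mul_le_mul_of_nonneg_left h3 (by positivity)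
      _ = Real.exp (1 / l) * ((1 / (2 * l)) * Real.exp (-|y| / l)) := by ring
  have key : ∀ s : Set ℝ, ∫ y in s, f (y + c) ≤ Real.exp (1 / l) * ∫ y in s, f y := by
    intro s
    have hshift : ∫ y in s, f (y + c) ≤ ∫ y in s, Real.exp (1 / l) * f y :=
      setIntegral_mono (hintc.integrableOn) ((hint.const_mul _).integrableOn) hpt
    exact hshift.trans (le_of_eq (integral_const_mul _ _))
  have hIoi : (fun y : ℝ => y + c) ⁻¹' Set.Ioi a = Set.Ioi b := by
    ext y
    simp only [Set.mem_preimage, Set.mem_Ioi, hc]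
    constructor <;> intro h <;> linarith
  have hIic : (fun y : ℝ => y + c) ⁻¹' Set.Iic a = Set.Iic b := by
    ext y
    simp only [Set.mem_preimage, Set.mem_Iic, hc]
    constructor <;> intro h <;> linarith
  constructor
  · have e1 : lapTail l a = ∫ y in Set.Ioi b, f (y + c) := by
      rw [lapTail, lap_shift l c (Set.Ioi a) measurableSet_Ioi, hIoi]
    rw [e1]
    exact key (Set.Ioi b)
  · have e1 : lapCDF l a = ∫ y in Set.Iic b, f (y + c) := by
      rw [lapCDF, lap_shift l c (Set.Iic a) measurableSet_Iic, hIic]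
    rw [e1]
    exact key (Set.Iic b)
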